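/- With the projection setup below, the residual r = c − 𝐀𝐕y can be represented as r = Σ_{i=1}^d V̄_i r_i + ĉ, where ĉ := (∏_{i=1}^d (I − V̄_i V̄_i^H)) c; moreover ĉ = 0 whenever c lies in the column space of 𝐕. -/

import Mathlib

open Matrix

/-- Sizes of the mixed index space in which the `i`-th slot keeps size `n i`
and all other slots are projected to size `m j`. -/
def mixN {d : ℕ} (n m : Fin d → ℕ) (i j : Fin d) : ℕ := if j = i then n j else m j

/-- Kronecker sum `Σⱼ I ⊗ ⋯ ⊗ Bⱼ ⊗ ⋯ ⊗ I`, encoded entrywise on the (dependent)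
product index set. -/
noncomputable def kronSum {d : ℕ} (N : Fin d → ℕ)
    (B : ∀ j, Matrix (Fin (N j)) (Fin (N j)) ℂ) :
    Matrix (∀ j, Fin (N j)) (∀ j, Fin (N j)) ℂ :=
  ∑ j, Matrix.of fun p q =>
    B j (p j) (q j) * ∏ l ∈ Finset.univ.erase j, (if p l = q l then (1 : ℂ) else 0)

/-- The `d`-fold Kronecker product, encoded entrywise. -/
noncomputable def bigKron {d : ℕ} {N M : Fin d → ℕ}
    (V : ∀ j, Matrix (Fin (N j)) (Fin (M j)) ℂ) :
    Matrix (∀ j, Fin (N j)) (∀ j, Fin (M j)) ℂ :=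
  Matrix.of fun p q => ∏ j, V j (p j) (q j)

/-- `V̄ᵢ = V_d ⊗ ⋯ ⊗ V_{i+1} ⊗ I_{nᵢ} ⊗ V_{i-1} ⊗ ⋯ ⊗ V₁`. -/
noncomputable def VbarM {d : ℕ} (n m : Fin d → ℕ)
    (V : ∀ j, Matrix (Fin (n j)) (Fin (m j)) ℂ) (i : Fin d) :
    Matrix (∀ j, Fin (n j)) (∀ j, Fin (mixN n m i j)) ℂ :=
  Matrix.of fun p q => ∏ j,
    if h : j = i then (if p j = Fin.cast (by simp [mixN, h]) (q j) then (1 : ℂ) else 0)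
    else V j (p j) (Fin.cast (by simp [mixN, h]) (q j))

/-- `𝐕ᵢ = I_{m_d} ⊗ ⋯ ⊗ I_{m_{i+1}} ⊗ Vᵢ ⊗ I_{m_{i-1}} ⊗ ⋯ ⊗ I_{m₁}`. -/
noncomputable def ViM {d : ℕ} (n m : Fin d → ℕ)
    (V : ∀ j, Matrix (Fin (n j)) (Fin (m j)) ℂ) (i : Fin d) :
    Matrix (∀ j, Fin (mixN n m i j)) (∀ j, Fin (m j)) ℂ :=
  Matrix.of fun p q => ∏ j,
    if h : j = i then V j (Fin.cast (by simp [mixN, h]) (p j)) (q j)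
    else (if Fin.cast (show mixN n m i j = m j by simp [mixN, h]) (p j) = q j
      then (1 : ℂ) else 0)

/-- `Mᵢ`: the Kronecker sum whose `j`-th term carries `Aⱼ^{(k)} = VⱼᴴAⱼVⱼ` in slot
`j ≠ i` and `Aᵢ` in slot `i`, the identities having size `m_l` (`l ≠ i`) resp. `nᵢ`. -/
noncomputable def MiM {d : ℕ} (n m : Fin d → ℕ)
    (A : ∀ j, Matrix (Fin (n j)) (Fin (n j)) ℂ)
    (V : ∀ j, Matrix (Fin (n j)) (Fin (m j)) ℂ) (i : Fin d) :
    Matrix (∀ j, Fin (mixN n m i j)) (∀ j, Fin (mixN n m i j)) ℂ :=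
  kronSum (mixN n m i) fun j =>
    if h : j = i then
      Matrix.reindex (finCongr (show n j = mixN n m i j by simp [mixN, h]))
        (finCongr (show n j = mixN n m i j by simp [mixN, h])) (A j)
    else
      Matrix.reindex (finCongr (show m j = mixN n m i j by simp [mixN, h]))
        (finCongr (show m j = mixN n m i j by simp [mixN, h])) ((V j)ᴴ * A j * V j)

/-! ### Auxiliary machinery -/

section Aux

/-- Recast the column index of a matrix along an equality of sizes. -/
def rcM {a b c : ℕ} (h : c = b) (X : Matrix (Fin a) (Fin b) ℂ) : Matrix (Fin a) (Fin c) ℂ :=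
  X.submatrix id (Fin.cast h)

/-- Recast the row index of a matrix along an equality of sizes. -/
def rrM {a b c : ℕ} (h : c = a) (X : Matrix (Fin a) (Fin b) ℂ) : Matrix (Fin c) (Fin b) ℂ :=
  X.submatrix (Fin.cast h) id

lemma rcM_rfl {a b : ℕ} (h : b = b) (X : Matrix (Fin a) (Fin b) ℂ) : rcM h X = X := rfl
lemma rrM_rfl {a b : ℕ} (h : a = a) (X : Matrix (Fin a) (Fin b) ℂ) : rrM h X = X := rfl

lemma mul_rcM {a b c e : ℕ} (h : c = b) (X : Matrix (Fin e) (Fin a) ℂ)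
    (Y : Matrix (Fin a) (Fin b) ℂ) : X * rcM h Y = rcM h (X * Y) := by
  ext p q; simp [rcM, Matrix.mul_apply]

lemma rrM_mul {a b c e : ℕ} (h : c = a) (X : Matrix (Fin a) (Fin b) ℂ)
    (Y : Matrix (Fin b) (Fin e) ℂ) : rrM h X * Y = rrM h (X * Y) := by
  ext p q; simp [rrM, Matrix.mul_apply]

lemma rcM_mul_rrM {a b c e : ℕ} (h : c = b) (X : Matrix (Fin a) (Fin b) ℂ)
    (Y : Matrix (Fin b) (Fin e) ℂ) : rcM h X * rrM h Y = X * Y := by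
  have h1 : rcM h X = X.submatrix id ⇑(finCongr h) := rfl
  have h2 : rrM h Y = Y.submatrix ⇑(finCongr h) id := rfl
  rw [h1, h2, Matrix.submatrix_mul_equiv, Matrix.submatrix_id_id]

lemma rcM_conjT {a b c : ℕ} (h : c = b) (X : Matrix (Fin a) (Fin b) ℂ) :
    (rcM h X)ᴴ = rrM h Xᴴ := rfl
lemma rrM_conjT {a b c : ℕ} (h : c = a) (X : Matrix (Fin a) (Fin b) ℂ) :
    (rrM h X)ᴴ = rcM h Xᴴ := rfl

lemma rrM_rcM_one {a c : ℕ} (h : c = a) :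
    rrM h (rcM h (1 : Matrix (Fin a) (Fin a) ℂ)) = 1 := by
  have h1 : rrM h (rcM h (1 : Matrix (Fin a) (Fin a) ℂ))
      = (1 : Matrix (Fin a) (Fin a) ℂ).submatrix ⇑(finCongr h) ⇑(finCongr h) := rfl
  rw [h1, Matrix.submatrix_one_equiv]

lemma bigKron_mul {d : ℕ} {N M K : Fin d → ℕ}
    (W : ∀ j, Matrix (Fin (N j)) (Fin (M j)) ℂ) (U : ∀ j, Matrix (Fin (M j)) (Fin (K j)) ℂ) :
    bigKron W * bigKron U = bigKron (fun j => W j * U j) := by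
  ext p q
  simp only [bigKron, Matrix.mul_apply, Matrix.of_apply]
  have h1 := Finset.prod_univ_sum (fun j => (Finset.univ : Finset (Fin (M j))))
    (fun j x => W j (p j) x * U j x (q j))
  rw [Fintype.piFinset_univ] at h1
  rw [h1]
  exact Finset.sum_congr rfl (fun f _ => Finset.prod_mul_distrib.symm)

lemma bigKron_conjT {d : ℕ} {N M : Fin d → ℕ}
    (W : ∀ j, Matrix (Fin (N j)) (Fin (M j)) ℂ) :
    (bigKron W)ᴴ = bigKron (fun j => (W j)ᴴ) := by
  ext p q
  simp [bigKron, conjTranspose_apply, map_prod]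

lemma bigKron_one {d : ℕ} {N : Fin d → ℕ} :
    bigKron (fun j => (1 : Matrix (Fin (N j)) (Fin (N j)) ℂ)) = 1 := by
  ext p q
  simp only [bigKron, Matrix.of_apply, Matrix.one_apply]
  by_cases h : p = q
  · subst h; simp
  · rw [if_neg h]
    obtain ⟨j, hj⟩ := Function.ne_iff.mp h
    exact Finset.prod_eq_zero (Finset.mem_univ j) (by simp [hj])

lemma bigKron_congr {d : ℕ} {N M : Fin d → ℕ}
    {W U : ∀ j, Matrix (Fin (N j)) (Fin (M j)) ℂ} (h : ∀ j, W j = U j) :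
    bigKron W = bigKron U := by
  have hWU : W = U := funext h
  rw [hWU]

/-- The `j`-th slot family of the `j`-th Kronecker-sum term. -/
noncomputable def eSlot {d : ℕ} {N : Fin d → ℕ} (B : ∀ j, Matrix (Fin (N j)) (Fin (N j)) ℂ)
    (j l : Fin d) : Matrix (Fin (N l)) (Fin (N l)) ℂ :=
  if h : l = j then rrM (congrArg N h) (rcM (congrArg N h) (B j)) else 1

lemma eSlot_same {d : ℕ} {N : Fin d → ℕ} (B : ∀ j, Matrix (Fin (N j)) (Fin (N j)) ℂ)
    (j : Fin d) : eSlot B j j = B j := by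
  simp only [eSlot, dif_pos rfl, dite_true, if_true]; rfl

lemma eSlot_ne {d : ℕ} {N : Fin d → ℕ} (B : ∀ j, Matrix (Fin (N j)) (Fin (N j)) ℂ)
    {j l : Fin d} (h : l ≠ j) : eSlot B j l = 1 := by
  simp [eSlot, h]

lemma kronSum_eq {d : ℕ} (N : Fin d → ℕ) (B : ∀ j, Matrix (Fin (N j)) (Fin (N j)) ℂ) :
    kronSum N B = ∑ j, bigKron (eSlot B j) := by
  unfold kronSum
  refine Finset.sum_congr rfl (fun j _ => ?_)
  ext p q
  simp only [Matrix.of_apply, bigKron]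
  rw [← Finset.mul_prod_erase _ _ (Finset.mem_univ j)]
  congr 1
  · rw [eSlot_same]
  · refine Finset.prod_congr rfl (fun l hl => ?_)
    rw [eSlot_ne B (Finset.ne_of_mem_erase hl), Matrix.one_apply]

end Aux

section Slots

variable {d : ℕ} (n m : Fin d → ℕ)

lemma mixN_n {i j : Fin d} (h : j = i) : mixN n m i j = n j := by simp [mixN, h]
lemma mixN_m {i j : Fin d} (h : ¬ j = i) : mixN n m i j = m j := by simp [mixN, h]

variable (V : ∀ j, Matrix (Fin (n j)) (Fin (m j)) ℂ)
variable (A : ∀ j, Matrix (Fin (n j)) (Fin (n j)) ℂ)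

/-- Slot family of `V̄ᵢ`. -/
noncomputable def bSlot (i j : Fin d) : Matrix (Fin (n j)) (Fin (mixN n m i j)) ℂ :=
  if h : j = i then rcM (mixN_n n m h) (1 : Matrix (Fin (n j)) (Fin (n j)) ℂ)
  else rcM (mixN_m n m h) (V j)

/-- Slot family of `𝐕ᵢ`. -/
noncomputable def vSlot (i j : Fin d) : Matrix (Fin (mixN n m i j)) (Fin (m j)) ℂ :=
  if h : j = i then rrM (mixN_n n m h) (V j)
  else rrM (mixN_m n m h) (1 : Matrix (Fin (m j)) (Fin (m j)) ℂ)

/-- Slot family of the summands of `Mᵢ`. -/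
noncomputable def BSlot (i j : Fin d) : Matrix (Fin (mixN n m i j)) (Fin (mixN n m i j)) ℂ :=
  if h : j = i then rrM (mixN_n n m h) (rcM (mixN_n n m h) (A j))
  else rrM (mixN_m n m h) (rcM (mixN_m n m h) ((V j)ᴴ * A j * V j))

lemma VbarM_eq (i : Fin d) : VbarM n m V i = bigKron (bSlot n m V i) := by
  ext p q
  simp only [VbarM, bigKron, Matrix.of_apply]
  refine Finset.prod_congr rfl (fun j _ => ?_)
  by_cases h : j = i
  · simp only [bSlot, dif_pos h, rcM, Matrix.submatrix_apply, id_eq, Matrix.one_apply]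
  · simp only [bSlot, dif_neg h, rcM, Matrix.submatrix_apply, id_eq]

lemma ViM_eq (i : Fin d) : ViM n m V i = bigKron (vSlot n m V i) := by
  ext p q
  simp only [ViM, bigKron, Matrix.of_apply]
  refine Finset.prod_congr rfl (fun j _ => ?_)
  by_cases h : j = i
  · simp only [vSlot, dif_pos h, rrM, Matrix.submatrix_apply, id_eq]
  · simp only [vSlot, dif_neg h, rrM, Matrix.submatrix_apply, id_eq, Matrix.one_apply]

lemma MiM_eq (i : Fin d) : MiM n m A V i = kronSum (mixN n m i) (BSlot n m V A i) := by
  unfold MiM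
  congr 1

end Slots

section Slots2

variable {d : ℕ} (n m : Fin d → ℕ)
variable (V : ∀ j, Matrix (Fin (n j)) (Fin (m j)) ℂ)
variable (A : ∀ j, Matrix (Fin (n j)) (Fin (n j)) ℂ)

/-- Slot family of the projector `Pᵢ = V̄ᵢ V̄ᵢᴴ`. -/
noncomputable def QsM (i j : Fin d) : Matrix (Fin (n j)) (Fin (n j)) ℂ :=
  if j = i then 1 else V j * (V j)ᴴ

lemma slot_bv (i j : Fin d) :
    bSlot n m V i j * vSlot n m V i j = V j := by
  by_cases h : j = i
  · subst h
    simp only [bSlot, vSlot, dif_pos rfl, dite_true, if_true]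
    rw [rcM_mul_rrM, Matrix.one_mul]
  · simp only [bSlot, vSlot, dif_neg h]
    rw [rcM_mul_rrM, Matrix.mul_one]

lemma slot_bbH (i j : Fin d) :
    bSlot n m V i j * (bSlot n m V i j)ᴴ = QsM n m V i j := by
  by_cases h : j = i
  · subst h
    simp only [bSlot, QsM, dif_pos rfl, if_pos rfl, dite_true, if_true]
    rw [rcM_conjT, Matrix.conjTranspose_one, rcM_mul_rrM, Matrix.one_mul]
  · simp only [bSlot, QsM, dif_neg h, if_neg h]
    rw [rcM_conjT, rcM_mul_rrM]

lemma slot_M4 (hV : ∀ j, (V j)ᴴ * V j = 1) (i j l : Fin d) :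
    (bSlot n m V i l)ᴴ * (eSlot A j l * V l)
      = eSlot (BSlot n m V A i) j l * vSlot n m V i l := by
  by_cases hlj : l = j
  · subst hlj
    rw [eSlot_same, eSlot_same]
    by_cases hli : l = i
    · subst hli
      simp only [bSlot, BSlot, vSlot, dif_pos rfl, dite_true, if_true]
      rw [rcM_conjT, Matrix.conjTranspose_one, rrM_mul, Matrix.one_mul,
        rrM_mul, rcM_mul_rrM]
    · simp only [bSlot, BSlot, vSlot, dif_neg hli]
      rw [rcM_conjT, rrM_mul, rrM_mul, rcM_mul_rrM, Matrix.mul_one, Matrix.mul_assoc]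
  · rw [eSlot_ne A hlj, eSlot_ne _ hlj, Matrix.one_mul, Matrix.one_mul]
    by_cases hli : l = i
    · subst hli
      simp only [bSlot, vSlot, dif_pos rfl, dite_true, if_true]
      rw [rcM_conjT, Matrix.conjTranspose_one, rrM_mul, Matrix.one_mul]
    · simp only [bSlot, vSlot, dif_neg hli]
      rw [rcM_conjT, rrM_mul, hV]

lemma slot_M6a (hV : ∀ j, (V j)ᴴ * V j = 1) (i l : Fin d) :
    QsM n m V i l * (eSlot A i l * V l) = eSlot A i l * V l := by
  by_cases hli : l = i
  · subst hli
    simp only [QsM, if_pos rfl, if_true, Matrix.one_mul]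
  · rw [eSlot_ne A hli, Matrix.one_mul]
    simp only [QsM, if_neg hli]
    rw [Matrix.mul_assoc, hV, Matrix.mul_one]

lemma slot_M6b (hV : ∀ j, (V j)ᴴ * V j = 1) (i j l : Fin d) (hji : j ≠ i) :
    QsM n m V i l * (eSlot A j l * V l)
      = V l * eSlot (fun j => (V j)ᴴ * A j * V j) j l := by
  by_cases hlj : l = j
  · subst hlj
    rw [eSlot_same, eSlot_same]
    simp only [QsM, if_neg hji]
    rw [Matrix.mul_assoc (V l) ((V l)ᴴ), ← Matrix.mul_assoc ((V l)ᴴ)]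
  · rw [eSlot_ne A hlj, eSlot_ne _ hlj, Matrix.one_mul, Matrix.mul_one]
    by_cases hli : l = i
    · subst hli
      simp only [QsM, if_pos rfl, if_true, Matrix.one_mul]
    · simp only [QsM, if_neg hli]
      rw [Matrix.mul_assoc, hV, Matrix.mul_one]

lemma slot_QQ (hV : ∀ j, (V j)ᴴ * V j = 1) {i k : Fin d} (hik : i ≠ k) (l : Fin d) :
    QsM n m V i l * QsM n m V k l = V l * (V l)ᴴ := by
  simp only [QsM]
  by_cases hli : l = i
  · rw [if_pos hli, if_neg (by rw [hli]; exact hik), Matrix.one_mul]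
  · rw [if_neg hli]
    by_cases hlk : l = k
    · rw [if_pos hlk, Matrix.mul_one]
    · rw [if_neg hlk, Matrix.mul_assoc, ← Matrix.mul_assoc ((V l)ᴴ), hV,
        Matrix.one_mul]

lemma slot_QP (hV : ∀ j, (V j)ᴴ * V j = 1) (i l : Fin d) :
    QsM n m V i l * (V l * (V l)ᴴ) = V l * (V l)ᴴ := by
  simp only [QsM]
  by_cases hli : l = i
  · rw [if_pos hli, Matrix.one_mul]
  · rw [if_neg hli, Matrix.mul_assoc, ← Matrix.mul_assoc ((V l)ᴴ), hV, Matrix.one_mul]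

lemma slot_QV (hV : ∀ j, (V j)ᴴ * V j = 1) (i l : Fin d) :
    QsM n m V i l * V l = V l := by
  simp only [QsM]
  by_cases hli : l = i
  · rw [if_pos hli, Matrix.one_mul]
  · rw [if_neg hli, Matrix.mul_assoc, hV, Matrix.mul_one]

lemma slot_PV (hV : ∀ j, (V j)ᴴ * V j = 1) (l : Fin d) :
    (V l * (V l)ᴴ) * V l = V l := by
  rw [Matrix.mul_assoc, hV, Matrix.mul_one]

end Slots2

section MainIds

variable {d : ℕ} (n m : Fin d → ℕ)
variable (V : ∀ j, Matrix (Fin (n j)) (Fin (m j)) ℂ)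
variable (A : ∀ j, Matrix (Fin (n j)) (Fin (n j)) ℂ)

lemma M1 (i : Fin d) :
    VbarM n m V i * (VbarM n m V i)ᴴ = bigKron (QsM n m V i) := by
  rw [VbarM_eq, bigKron_conjT, bigKron_mul]
  exact bigKron_congr (slot_bbH n m V i)

lemma M4 (hV : ∀ j, (V j)ᴴ * V j = 1) (i : Fin d) :
    (VbarM n m V i)ᴴ * (kronSum n A * bigKron V) = MiM n m A V i * ViM n m V i := by
  rw [VbarM_eq, ViM_eq, MiM_eq, bigKron_conjT, kronSum_eq n A,
    kronSum_eq (mixN n m i) (BSlot n m V A i), Matrix.sum_mul, Matrix.mul_sum,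
    Matrix.sum_mul]
  refine Finset.sum_congr rfl fun j _ => ?_
  rw [bigKron_mul, bigKron_mul, bigKron_mul]
  exact bigKron_congr (fun l => slot_M4 n m V A hV i j l)

lemma hS_eq : kronSum n A * bigKron V = ∑ j, bigKron (fun l => eSlot A j l * V l) := by
  rw [kronSum_eq, Matrix.sum_mul]
  exact Finset.sum_congr rfl fun j _ => bigKron_mul _ _

lemma hT_eq : bigKron V * kronSum m (fun j => (V j)ᴴ * A j * V j)
    = ∑ j, bigKron (fun l => V l * eSlot (fun j => (V j)ᴴ * A j * V j) j l) := by
  rw [kronSum_eq, Matrix.mul_sum]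
  exact Finset.sum_congr rfl fun j _ => bigKron_mul _ _

lemma M6key (hV : ∀ j, (V j)ᴴ * V j = 1) (i : Fin d) :
    bigKron (QsM n m V i) * (kronSum n A * bigKron V)
      = bigKron (fun l => eSlot A i l * V l)
        + bigKron V * kronSum m (fun j => (V j)ᴴ * A j * V j)
        - bigKron (fun l => V l * eSlot (fun j => (V j)ᴴ * A j * V j) i l) := by
  rw [hS_eq, Matrix.mul_sum]
  calc (∑ j, bigKron (QsM n m V i) * bigKron (fun l => eSlot A j l * V l))
      = ∑ j, (if j = i then bigKron (fun l => eSlot A i l * V l)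
          else bigKron (fun l => V l * eSlot (fun j => (V j)ᴴ * A j * V j) j l)) := by
        refine Finset.sum_congr rfl fun j _ => ?_
        rw [bigKron_mul]
        by_cases hji : j = i
        · subst hji
          rw [if_pos rfl]
          exact bigKron_congr (slot_M6a n m V A hV j)
        · rw [if_neg hji]
          exact bigKron_congr (fun l => slot_M6b n m V A hV i j l hji)
    _ = bigKron (fun l => eSlot A i l * V l)
        + ∑ j ∈ Finset.univ.erase i,
            bigKron (fun l => V l * eSlot (fun j => (V j)ᴴ * A j * V j) j l) := by
        rw [← Finset.add_sum_erase _ _ (Finset.mem_univ i), if_pos rfl]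
        congr 1
        exact Finset.sum_congr rfl fun j hj => if_neg (Finset.ne_of_mem_erase hj)
    _ = bigKron (fun l => eSlot A i l * V l)
        + (∑ j, bigKron (fun l => V l * eSlot (fun j => (V j)ᴴ * A j * V j) j l)
            - bigKron (fun l => V l * eSlot (fun j => (V j)ᴴ * A j * V j) i l)) := by
        rw [Finset.sum_erase_eq_sub (Finset.mem_univ i)]
    _ = _ := by
        rw [← hT_eq, add_sub_assoc]

lemma M6 (hV : ∀ j, (V j)ᴴ * V j = 1) :
    ∑ i, bigKron (QsM n m V i) * (kronSum n A * bigKron V)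
      = kronSum n A * bigKron V
        + d • (bigKron V * kronSum m (fun j => (V j)ᴴ * A j * V j))
        - bigKron V * kronSum m (fun j => (V j)ᴴ * A j * V j) := by
  rw [Finset.sum_congr rfl fun i _ => M6key n m V A hV i]
  rw [Finset.sum_sub_distrib, Finset.sum_add_distrib, Finset.sum_const,
    Finset.card_univ, Fintype.card_fin, ← hT_eq, add_sub_assoc, ← hS_eq n m V A, ← add_sub_assoc]

lemma M7 (hV : ∀ j, (V j)ᴴ * V j = 1) {i k : Fin d} (hik : i ≠ k) :
    bigKron (QsM n m V i) * bigKron (QsM n m V k)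
      = bigKron (fun l => V l * (V l)ᴴ) := by
  rw [bigKron_mul]
  exact bigKron_congr (slot_QQ n m V hV hik)

lemma M8 (hV : ∀ j, (V j)ᴴ * V j = 1) (i : Fin d) :
    bigKron (QsM n m V i) * bigKron (fun l => V l * (V l)ᴴ)
      = bigKron (fun l => V l * (V l)ᴴ) := by
  rw [bigKron_mul]
  exact bigKron_congr (slot_QP n m V hV i)

lemma M9 (hV : ∀ j, (V j)ᴴ * V j = 1) (i : Fin d) :
    bigKron (QsM n m V i) * bigKron V = bigKron V := by
  rw [bigKron_mul]
  exact bigKron_congr (slot_QV n m V hV i)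

lemma M10 (hV : ∀ j, (V j)ᴴ * V j = 1) :
    bigKron (fun l => V l * (V l)ᴴ) * bigKron V = bigKron V := by
  rw [bigKron_mul]
  exact bigKron_congr (slot_PV n m V hV)

lemma MPP : bigKron V * (bigKron V)ᴴ = bigKron (fun l => V l * (V l)ᴴ) := by
  rw [bigKron_conjT, bigKron_mul]

end MainIds

section ListProd

variable {R : Type*} [Ring R] {ι : Type*}

lemma mul_list_sum_of_notMem (p : ι → R) (P : R)
    (hpp : ∀ i k, i ≠ k → p i * p k = P) (a : ι) :
    ∀ L : List ι, a ∉ L → p a * (L.map p).sum = L.length • P := by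
  intro L
  induction L with
  | nil => intro _; simp
  | cons b t ih =>
    intro ha
    have hab : a ≠ b := fun h => ha (h ▸ List.mem_cons_self (a := a) (l := t))
    have hat : a ∉ t := fun h => ha (List.mem_cons_of_mem b h)
    rw [List.map_cons, List.sum_cons, mul_add, hpp a b hab, ih hat,
      List.length_cons, succ_nsmul]
    abel

lemma prod_one_sub_list (p : ι → R) (P : R)
    (hpp : ∀ i k, i ≠ k → p i * p k = P) (hpP : ∀ i, p i * P = P) :
    ∀ (L : List ι) (a : ι), (a :: L).Nodup →
      ((a :: L).map (fun i => 1 - p i)).prod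
        = 1 - ((a :: L).map p).sum + L.length • P := by
  intro L
  induction L with
  | nil => intro a _; simp
  | cons b t ih =>
    intro a hnd
    have ha : a ∉ (b :: t) := (List.nodup_cons.mp hnd).1
    have hnd' : (b :: t).Nodup := (List.nodup_cons.mp hnd).2
    have hsum := mul_list_sum_of_notMem p P hpp a (b :: t) ha
    rw [List.map_cons (f := fun i => 1 - p i), List.prod_cons, ih b hnd', sub_mul, one_mul,
      mul_add, mul_sub, mul_one, hsum, mul_smul_comm, hpP]
    simp only [List.map_cons, List.sum_cons, List.length_cons, succ_nsmul]
    abel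

end ListProd

lemma sum_mulVec {ι X Y : Type*} [Fintype X] [Fintype Y] [DecidableEq X]
    (s : Finset ι) (f : ι → Matrix X Y ℂ) (v : Y → ℂ) :
    (∑ i ∈ s, f i) *ᵥ v = ∑ i ∈ s, f i *ᵥ v := by
  classical
  induction s using Finset.induction with
  | empty => simp [Matrix.zero_mulVec]
  | insert _ _ h ih =>
    rw [Finset.sum_insert h, Finset.sum_insert h, Matrix.add_mulVec, ih]

/-- Residual representation
`r = Σᵢ V̄ᵢ rᵢ + ĉ` with `ĉ = (∏ᵢ (I - V̄ᵢV̄ᵢᴴ)) c`, the remainder `ĉ` vanishing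
whenever `c` lies in the column space of `𝐕`. -/
theorem stmt_2 {d : ℕ} (n m : Fin d → ℕ)
    (A : ∀ i, Matrix (Fin (n i)) (Fin (n i)) ℂ)
    (V : ∀ i, Matrix (Fin (n i)) (Fin (m i)) ℂ)
    (hV : ∀ i, (V i)ᴴ * V i = 1)
    (c : (∀ j, Fin (n j)) → ℂ)
    (hAt : IsUnit (kronSum m fun i => (V i)ᴴ * A i * V i))
    (y : (∀ j, Fin (m j)) → ℂ)
    (hy : (kronSum m fun i => (V i)ᴴ * A i * V i) *ᵥ y = (bigKron V)ᴴ *ᵥ c) :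
    (c - kronSum n A *ᵥ (bigKron V *ᵥ y))
      = (∑ i, VbarM n m V i *ᵥ
          ((VbarM n m V i)ᴴ *ᵥ c - MiM n m A V i *ᵥ (ViM n m V i *ᵥ y)))
        + ((List.finRange d).map fun i => 1 - VbarM n m V i * (VbarM n m V i)ᴴ).prod *ᵥ c
    ∧ ((∃ z, c = bigKron V *ᵥ z) →
        ((List.finRange d).map fun i => 1 - VbarM n m V i * (VbarM n m V i)ᴴ).prod *ᵥ c
          = 0) := by
  classical
  cases d with
  | zero =>
    have hc : c = 0 := by
      have h0 : (kronSum m fun i => (V i)ᴴ * A i * V i) = 0 := by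
        simp [kronSum]
      rw [h0, Matrix.zero_mulVec] at hy
      funext p
      have h2 := congrFun hy.symm (fun j => j.elim0)
      simp only [Matrix.mulVec, dotProduct, bigKron, Matrix.conjTranspose_apply,
        Matrix.of_apply, Pi.zero_apply, Finset.univ_eq_empty (α := Fin 0),
        Finset.prod_empty, star_one, one_mul] at h2
      have h4 : ∑ k : (∀ j : Fin 0, Fin (n j)), c k = c p :=
        Fintype.sum_subsingleton _ p
      exact h4.symm.trans h2
    constructor
    · have h0 : kronSum n A = 0 := by simp [kronSum]
      rw [h0, Matrix.zero_mulVec, sub_zero]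
      simp [Matrix.one_mulVec]
    · intro _
      rw [hc, Matrix.mulVec_zero]
  | succ d' =>
    -- step 1: rewrite each summand
    have e1 : ∀ i, VbarM n m V i *ᵥ ((VbarM n m V i)ᴴ *ᵥ c - MiM n m A V i *ᵥ (ViM n m V i *ᵥ y))
        = bigKron (QsM n m V i) *ᵥ c
          - (bigKron (QsM n m V i) * (kronSum n A * bigKron V)) *ᵥ y := by
      intro i
      rw [Matrix.mulVec_sub, Matrix.mulVec_mulVec, M1, Matrix.mulVec_mulVec,
        Matrix.mulVec_mulVec, Matrix.mul_assoc, ← M4 n m V A hV i, ← Matrix.mul_assoc, M1]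
    have e3 : (bigKron V * kronSum m fun j => (V j)ᴴ * A j * V j) *ᵥ y
        = bigKron (fun l => V l * (V l)ᴴ) *ᵥ c := by
      rw [← Matrix.mulVec_mulVec, hy, Matrix.mulVec_mulVec, MPP]
    have hprod : ((List.finRange (d' + 1)).map
          fun i => 1 - VbarM n m V i * (VbarM n m V i)ᴴ).prod
        = 1 - (∑ i, bigKron (QsM n m V i)) + d' • bigKron (fun l => V l * (V l)ᴴ) := by
      have hfn : (fun i => 1 - VbarM n m V i * (VbarM n m V i)ᴴ)
          = fun i : Fin (d' + 1) => 1 - bigKron (QsM n m V i) :=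
        funext fun i => by rw [M1]
      have hnd : ((0 : Fin (d' + 1)) :: (List.finRange d').map Fin.succ).Nodup := by
        rw [← List.finRange_succ]
        exact List.nodup_finRange _
      rw [hfn, List.finRange_succ,
        prod_one_sub_list _ _ (fun i k hik => M7 n m V hV hik) (fun i => M8 n m V hV i)
          ((List.finRange d').map Fin.succ) 0 hnd,
        ← List.finRange_succ, ← Fin.sum_univ_def]
      simp
    constructor
    · rw [Finset.sum_congr rfl fun i _ => e1 i, Finset.sum_sub_distrib,
        ← _root_.sum_mulVec Finset.univ (fun i => bigKron (QsM n m V i) * (kronSum n A * bigKron V)) y,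
        M6 n m V A hV, hprod, Matrix.mulVec_mulVec,
        Matrix.sub_mulVec, Matrix.add_mulVec, Matrix.smul_mulVec, e3,
        Matrix.add_mulVec, Matrix.sub_mulVec, Matrix.one_mulVec, Matrix.smul_mulVec,
        _root_.sum_mulVec]
      rw [succ_nsmul]
      abel
    · rintro ⟨z, hz⟩
      have hPc : ∀ i, bigKron (QsM n m V i) *ᵥ c = c := by
        intro i
        rw [hz, Matrix.mulVec_mulVec, M9 n m V hV]
      have hPPc : bigKron (fun l => V l * (V l)ᴴ) *ᵥ c = c := by
        rw [hz, Matrix.mulVec_mulVec, M10 n m V hV]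
      rw [hprod, Matrix.add_mulVec, Matrix.sub_mulVec, Matrix.one_mulVec,
        Matrix.smul_mulVec, _root_.sum_mulVec, Finset.sum_congr rfl fun i _ => hPc i, hPPc,
        Finset.sum_const, Finset.card_univ, Fintype.card_fin, succ_nsmul]
      abel
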